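/- As n → ∞, max_{0 ≤ k ≤ n} | s_k² / s_n² − Σ_{i=1}^k (Z_i − Z̄_n)² / Σ_{i=1}^n (Z_i − Z̄_n)² | converges to 0 in probability; that is, for every ε > 0, P( max_{0 ≤ k ≤ n} | s_k²/s_n² − Σ_{i=1}^k (Z_i − Z̄_n)² / Σ_{i=1}^n (Z_i − Z̄_n)² | ≥ ε ) → 0, where Z̄_n := n^{−1} Σ_{i=1}^n Z_i and empty sums are 0. -/

import Mathlib

open MeasureTheory ProbabilityTheory Filter
open scoped Classical


/-- Markov inequality corollary. -/
lemma markov_aux {Ω : Type*} [MeasurableSpace Ω] (P : Measure Ω) [IsProbabilityMeasure P]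
    {f : Ω → ℝ} (h0 : 0 ≤ᵐ[P] f) (hint : Integrable f P) {t : ℝ} (ht : 0 < t) :
    P {ω | t ≤ f ω} ≤ ENNReal.ofReal ((∫ ω, f ω ∂P) / t) := by
  have h := mul_meas_ge_le_integral_of_nonneg h0 hint t
  have h2 : (P {ω | t ≤ f ω}).toReal ≤ (∫ ω, f ω ∂P) / t := by
    change t * (P {ω | t ≤ f ω}).toReal ≤ _ at h
    rw [le_div_iff₀ ht]; linarith
  calc P {ω | t ≤ f ω} = ENNReal.ofReal (P {ω | t ≤ f ω}).toReal :=
        (ENNReal.ofReal_toReal (measure_ne_top _ _)).symm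
    _ ≤ _ := ENNReal.ofReal_le_ofReal h2

/-- Final ratio algebra. -/
lemma ratio_close {bk bn tk tn c : ℝ} (hbn : 0 < bn) (hc : 0 < c) (hc4 : c ≤ 1/4)
    (htk0 : 0 ≤ tk) (htkn : tk ≤ tn)
    (hk : |tk - bk| ≤ c * bn) (hn : |tn - bn| ≤ c * bn) :
    |bk / bn - tk / tn| ≤ 2 * c := by
  have hn' := abs_le.1 hn
  have htnpos : 0 < tn := by nlinarith
  have key : bk / bn - tk / tn = (bk - tk) / bn + (tk / tn) * ((tn - bn) / bn) := by
    field_simp; ring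
  rw [key]
  have h1 : |(bk - tk) / bn| ≤ c := by
    rw [abs_div, abs_of_pos hbn, div_le_iff₀ hbn, abs_sub_comm]; exact hk
  have h2 : |tk / tn| ≤ 1 := by
    rw [abs_div, abs_of_pos htnpos, div_le_one htnpos, abs_of_nonneg htk0]; exact htkn
  have h3 : |(tn - bn) / bn| ≤ c := by
    rw [abs_div, abs_of_pos hbn, div_le_iff₀ hbn]; exact hn
  calc |(bk - tk) / bn + tk / tn * ((tn - bn) / bn)|
      ≤ |(bk - tk) / bn| + |tk / tn| * |(tn - bn) / bn| := by
        refine (abs_add_le _ _).trans ?_; rw [abs_mul]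
    _ ≤ c + 1 * c := by
        refine add_le_add h1 ?_
        exact mul_le_mul h2 h3 (abs_nonneg _) zero_le_one
    _ = 2 * c := by ring

/-- Cross term bound. -/
lemma cross_term {z : ℕ → ℝ} {v θ : ℝ} (hθ : 0 < θ) (n : ℕ) :
    ∀ k ≤ n, |∑ i ∈ Finset.range k, (z i - v) ^ 2 - ∑ i ∈ Finset.range k, (z i) ^ 2|
      ≤ θ * ∑ i ∈ Finset.range n, (z i) ^ 2 + (1 + 1 / θ) * n * v ^ 2 := by
  intro k hk
  have hterm : ∀ i, |(z i - v) ^ 2 - (z i) ^ 2| ≤ θ * (z i) ^ 2 + (1 + 1 / θ) * v ^ 2 := by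
    intro i
    have h3 : 2 * |v| * |z i| ≤ θ * (z i) ^ 2 + v ^ 2 / θ := by
      have h4 : 2 * |v| * |z i| * θ ≤ (θ * |z i|) ^ 2 + |v| ^ 2 := by
        nlinarith [sq_nonneg (θ * |z i| - |v|)]
      have h5 : 2 * |v| * |z i| = 2 * |v| * |z i| * θ / θ := by field_simp
      rw [h5, div_le_iff₀ hθ]
      calc 2 * |v| * |z i| * θ ≤ (θ * |z i|) ^ 2 + |v| ^ 2 := h4
        _ = (θ * (z i) ^ 2 + v ^ 2 / θ) * θ := by rw [mul_pow, sq_abs, sq_abs]; field_simp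
    have h6 : |(z i - v) ^ 2 - (z i) ^ 2| = |(-2) * v * z i + v ^ 2| := by ring_nf
    have h7 : |(-2) * v * z i + v ^ 2| ≤ 2 * |v| * |z i| + v ^ 2 := by
      refine (abs_add_le _ _).trans ?_
      rw [abs_mul, abs_mul, abs_neg, abs_two, abs_sq]
    have h8 : v ^ 2 + v ^ 2 / θ = (1 + 1 / θ) * v ^ 2 := by field_simp
    rw [h6]; linarith
  calc |∑ i ∈ Finset.range k, (z i - v) ^ 2 - ∑ i ∈ Finset.range k, (z i) ^ 2|
      = |∑ i ∈ Finset.range k, ((z i - v) ^ 2 - (z i) ^ 2)| := by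
        rw [Finset.sum_sub_distrib]
    _ ≤ ∑ i ∈ Finset.range k, |(z i - v) ^ 2 - (z i) ^ 2| :=
        Finset.abs_sum_le_sum_abs _ _
    _ ≤ ∑ i ∈ Finset.range k, (θ * (z i) ^ 2 + (1 + 1 / θ) * v ^ 2) :=
        Finset.sum_le_sum fun i _ => hterm i
    _ = θ * ∑ i ∈ Finset.range k, (z i) ^ 2 + (1 + 1 / θ) * k * v ^ 2 := by
        rw [Finset.sum_add_distrib, Finset.sum_const, ← Finset.mul_sum]
        simp [Finset.card_range]; ring
    _ ≤ θ * ∑ i ∈ Finset.range n, (z i) ^ 2 + (1 + 1 / θ) * n * v ^ 2 := by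
        have hsub : ∑ i ∈ Finset.range k, (z i) ^ 2 ≤ ∑ i ∈ Finset.range n, (z i) ^ 2 :=
          Finset.sum_le_sum_of_subset_of_nonneg (Finset.range_subset_range.2 hk)
            (fun i _ _ => sq_nonneg _)
        have hkn : (k : ℝ) ≤ n := Nat.cast_le.2 hk
        gcongr <;> positivity

noncomputable def gridPt (b : ℕ → ℝ) (n m j : ℕ) : ℕ := sInf {k | (j : ℝ) * (b n / m) ≤ b k}

lemma grid_approx {a b : ℕ → ℝ} {n m : ℕ} {γ : ℝ} (hm : 0 < m) (hγ : 0 < γ)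
    (hb0 : b 0 = 0) (hbmono : StrictMono b) (hbn : 0 < b n)
    (hinc : ∀ i < n, b (i + 1) - b i ≤ γ)
    (ha : Monotone a) :
    ∀ k ≤ n, ∃ j ≤ m, gridPt b n m j ≤ n ∧
      |a k - b k| ≤ |a (gridPt b n m j) - b (gridPt b n m j)| + b n / m + γ := by
  have hm' : (0 : ℝ) < m := by exact_mod_cast hm
  set q : ℝ := b n / m with hq
  have hq0 : 0 < q := by positivity
  have hbnn : ∀ k, 0 ≤ b k := fun k => hb0 ▸ hbmono.monotone (Nat.zero_le k)
  have hmem : ∀ j, j ≤ m → n ∈ {k | (j : ℝ) * q ≤ b k} := by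
    intro j hj
    have hjm : (j : ℝ) ≤ m := by exact_mod_cast hj
    simp only [Set.mem_setOf_eq, hq]
    rw [mul_div_assoc']
    rw [div_le_iff₀ hm']
    nlinarith
  have P1 : ∀ j ≤ m, gridPt b n m j ≤ n := fun j hj => Nat.sInf_le (hmem j hj)
  have P2 : ∀ j ≤ m, (j : ℝ) * q ≤ b (gridPt b n m j) := by
    intro j hj
    exact Nat.sInf_mem (⟨n, hmem j hj⟩ : {k | (j : ℝ) * q ≤ b k}.Nonempty)
  have P3 : ∀ j ≤ m, b (gridPt b n m j) ≤ (j : ℝ) * q + γ := by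
    intro j hj
    rcases Nat.eq_zero_or_pos (gridPt b n m j) with h0 | hpos'
    · rw [h0, hb0]; positivity
    · obtain ⟨t, ht⟩ := Nat.exists_eq_succ_of_ne_zero hpos'.ne'
      have htn : t < n := by
        have := P1 j hj; omega
      have htnot : t ∉ {k | (j : ℝ) * q ≤ b k} := by
        intro hc
        have := Nat.sInf_le hc
        rw [← gridPt] at this
        omega
      simp only [Set.mem_setOf_eq, not_le] at htnot
      have := hinc t htn
      rw [ht]
      linarith
  intro k hk
  have hbk : b k ≤ b n := hbmono.monotone hk
  set j0 := ⌊b k * m / b n⌋₊ with hj0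
  have hfl : (j0 : ℝ) ≤ b k * m / b n := Nat.floor_le (div_nonneg (mul_nonneg (hbnn k) hm'.le) hbn.le)
  have hfu : b k * m / b n < j0 + 1 := Nat.lt_floor_add_one _
  have hj0m : j0 ≤ m := by
    have h1 : b k * m / b n ≤ (m : ℝ) := by
      rw [div_le_iff₀ hbn]; nlinarith
    have := Nat.floor_mono h1
    rwa [Nat.floor_natCast] at this
  by_cases hcase : j0 = m
  · -- b k ≥ b n, so k = n and gridPt at m equals n
    have hbkn : b n ≤ b k := by
      have : (m : ℝ) ≤ b k * m / b n := hcase ▸ hfl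
      rw [le_div_iff₀ hbn] at this
      nlinarith
    have hkn : k = n := by
      rcases lt_or_eq_of_le hk with h | h
      · exact absurd (hbmono h) (by linarith)
      · exact h
    have hgm : gridPt b n m m = n := by
      have h1 := P1 m le_rfl
      have h2 := P2 m le_rfl
      have h3 : b n ≤ b (gridPt b n m m) := by
        rw [hq, mul_div_assoc'] at h2
        rw [mul_comm] at h2
        rw [mul_div_assoc] at h2
        rw [div_self hm'.ne', mul_one] at h2
        exact h2
      rcases lt_or_eq_of_le h1 with h | h
      · exact absurd (hbmono h) (by linarith)
      · exact h
    refine ⟨m, le_rfl, by rw [hgm], ?_⟩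
    rw [hgm, hkn]
    have : 0 ≤ b n / m := by positivity
    linarith [abs_nonneg (a n - b n)]
  · have hj1m : j0 + 1 ≤ m := by omega
    have hk1 : gridPt b n m j0 ≤ k := by
      apply Nat.sInf_le
      simp only [Set.mem_setOf_eq, hq, mul_div_assoc']
      rw [div_le_iff₀ hm']
      rw [le_div_iff₀ hbn] at hfl
      nlinarith
    have hk2 : k ≤ gridPt b n m (j0 + 1) := by
      by_contra hcc
      push_neg at hcc
      have h1 : b (gridPt b n m (j0 + 1)) ≤ b k := hbmono.monotone hcc.le
      have h2 := P2 (j0 + 1) hj1m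
      push_cast at h2
      have h3 : b k < ((j0 : ℝ) + 1) * q := by
        rw [hq, mul_div_assoc']
        rw [lt_div_iff₀ hm']
        rw [div_lt_iff₀ hbn] at hfu
        nlinarith
      linarith
    have e1 : a (gridPt b n m j0) ≤ a k := ha hk1
    have e1' : a k ≤ a (gridPt b n m (j0 + 1)) := ha hk2
    have e2 : b (gridPt b n m j0) ≤ b k := hbmono.monotone hk1
    have e2' : b k ≤ b (gridPt b n m (j0 + 1)) := hbmono.monotone hk2
    have e3 : b (gridPt b n m (j0 + 1)) - b (gridPt b n m j0) ≤ q + γ := by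
      have h2 := P2 j0 hj0m
      have h3 := P3 (j0 + 1) hj1m
      push_cast at h3
      nlinarith
    rcases le_or_gt (a k) (b k) with hle | hlt
    · refine ⟨j0, hj0m, P1 j0 hj0m, ?_⟩
      have habs : b (gridPt b n m j0) - a (gridPt b n m j0) ≤
          |a (gridPt b n m j0) - b (gridPt b n m j0)| := by
        rw [abs_sub_comm]; exact le_abs_self _
      rw [abs_of_nonpos (by linarith)]
      linarith
    · refine ⟨j0 + 1, hj1m, P1 (j0 + 1) hj1m, ?_⟩
      have habs : a (gridPt b n m (j0 + 1)) - b (gridPt b n m (j0 + 1)) ≤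
          |a (gridPt b n m (j0 + 1)) - b (gridPt b n m (j0 + 1))| := le_abs_self _
      rw [abs_of_pos (by linarith)]
      linarith


lemma trunc_lemma {Ω : Type*} [MeasurableSpace Ω] (P : Measure Ω) [IsProbabilityMeasure P]
    (Z : ℕ → Ω → ℝ) (σ2 : ℕ → ℝ) (hmeas : ∀ i, Measurable (Z i))
    (hindep : iIndepFun Z P)
    (hL2 : ∀ i, MemLp (Z i) 2 P)
    (hvar : ∀ i, ∫ ω, (Z i ω) ^ 2 ∂P = σ2 i)
    (hσ : ∀ i, 0 ≤ σ2 i)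
    (n : ℕ) {δ η₃ : ℝ} (hδ : 0 < δ) (hη₃ : 0 < η₃)
    (hBn : 0 < ∑ i ∈ Finset.range n, σ2 i)
    (hL : (∑ i ∈ Finset.range n,
        ∫ ω in {ω | δ * Real.sqrt (∑ j ∈ Finset.range n, σ2 j) ≤ |Z i ω|}, (Z i ω) ^ 2 ∂P)
      ≤ η₃ * ∑ i ∈ Finset.range n, σ2 i)
    (s : Finset ℕ) (hs : ∀ k ∈ s, k ≤ n) (N : ℕ) (hsN : s.card ≤ N) :
    P {ω | ∃ k ∈ s, 3 * η₃ * (∑ i ∈ Finset.range n, σ2 i) ≤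
        |∑ i ∈ Finset.range k, (Z i ω) ^ 2 - ∑ i ∈ Finset.range k, σ2 i|}
      ≤ N * ENNReal.ofReal (δ ^ 2 / η₃ ^ 2) +
        ENNReal.ofReal ((∑ i ∈ Finset.range n,
          ∫ ω in {ω | δ * Real.sqrt (∑ j ∈ Finset.range n, σ2 j) ≤ |Z i ω|}, (Z i ω) ^ 2 ∂P) /
          (η₃ * ∑ i ∈ Finset.range n, σ2 i)) := by
  set Bn := ∑ i ∈ Finset.range n, σ2 i with hBndef
  set c' := δ * Real.sqrt Bn with hc'def
  have hsq : Real.sqrt Bn > 0 := Real.sqrt_pos.2 hBn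
  have hc' : 0 < c' := by positivity
  have hc'sq : c' ^ 2 = δ ^ 2 * Bn := by
    rw [hc'def, mul_pow, Real.sq_sqrt hBn.le]
  set φ : ℝ → ℝ := fun x => if |x| < c' then x ^ 2 else 0 with hφdef
  set ψ : ℝ → ℝ := fun x => if |x| < c' then 0 else x ^ 2 with hψdef
  have hφm : Measurable φ :=
    Measurable.ite (measurableSet_lt continuous_abs.measurable measurable_const)
      (measurable_id.pow_const 2) measurable_const
  have hψm : Measurable ψ :=
    Measurable.ite (measurableSet_lt continuous_abs.measurable measurable_const)
      measurable_const (measurable_id.pow_const 2)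
  -- pointwise facts
  have hφ0 : ∀ x, 0 ≤ φ x := by intro x; simp only [hφdef]; split_ifs <;> positivity
  have hψ0 : ∀ x, 0 ≤ ψ x := by intro x; simp only [hψdef]; split_ifs <;> positivity
  have hφψ : ∀ x, φ x + ψ x = x ^ 2 := by intro x; simp only [hφdef, hψdef]; split_ifs <;> ring
  have hφbd : ∀ x, φ x ≤ c' ^ 2 := by
    intro x; simp only [hφdef]; split_ifs with h
    · nlinarith [sq_abs x, abs_nonneg x]
    · positivity
  have hφsq : ∀ x, (φ x) ^ 2 ≤ c' ^ 2 * x ^ 2 := by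
    intro x; simp only [hφdef]; split_ifs with h
    · have h2 : x ^ 2 ≤ c' ^ 2 := by nlinarith [sq_abs x, abs_nonneg x]
      nlinarith [sq_nonneg x]
    · simpa using mul_nonneg (sq_nonneg c') (sq_nonneg x)
  set Y : ℕ → Ω → ℝ := fun i ω => φ (Z i ω) with hYdef
  set R : ℕ → Ω → ℝ := fun i ω => ψ (Z i ω) with hRdef
  have hZ2int : ∀ i, Integrable (fun ω => Z i ω ^ 2) P := fun i => (hL2 i).integrable_sq
  have hYint : ∀ i, Integrable (Y i) P := by
    intro i
    refine Integrable.mono' (hZ2int i) ((hφm.comp (hmeas i)).aestronglyMeasurable)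
      (ae_of_all _ fun ω => ?_)
    rw [Real.norm_eq_abs, abs_of_nonneg (hφ0 _)]
    have := hφψ (Z i ω); have := hψ0 (Z i ω); linarith
  have hRint : ∀ i, Integrable (R i) P := by
    intro i
    refine Integrable.mono' (hZ2int i) ((hψm.comp (hmeas i)).aestronglyMeasurable)
      (ae_of_all _ fun ω => ?_)
    rw [Real.norm_eq_abs, abs_of_nonneg (hψ0 _)]
    have := hφψ (Z i ω); have := hφ0 (Z i ω); linarith
  have hSm : ∀ i, MeasurableSet {ω | c' ≤ |Z i ω|} :=
    fun i => measurableSet_le measurable_const (hmeas i).abs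
  have hRind : ∀ i, R i = Set.indicator {ω | c' ≤ |Z i ω|} (fun ω => Z i ω ^ 2) := by
    intro i; funext ω
    simp only [hRdef, hψdef, Set.indicator_apply, Set.mem_setOf_eq]
    by_cases h : c' ≤ |Z i ω|
    · rw [if_pos h, if_neg (not_lt.2 h)]
    · rw [if_neg h, if_pos (lt_of_not_ge h)]
  have hER : ∀ i, ∫ ω, R i ω ∂P = ∫ ω in {ω | c' ≤ |Z i ω|}, Z i ω ^ 2 ∂P := by
    intro i; rw [hRind i, integral_indicator (hSm i)]
  have hER0 : ∀ i, 0 ≤ ∫ ω, R i ω ∂P := fun i => integral_nonneg fun ω => hψ0 _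
  have hsplit : ∀ i, σ2 i = (∫ ω, Y i ω ∂P) + ∫ ω, R i ω ∂P := by
    intro i
    rw [← integral_add (hYint i) (hRint i), ← hvar i]
    exact (integral_congr_ae (ae_of_all _ fun ω => by
      simp only [hYdef, hRdef]; exact hφψ (Z i ω))).symm
  set L := ∑ i ∈ Finset.range n, ∫ ω in {ω | c' ≤ |Z i ω|}, (Z i ω) ^ 2 ∂P with hLdef
  have hL0 : 0 ≤ L := by
    rw [hLdef]
    exact Finset.sum_nonneg fun i _ => by rw [← hER i]; exact hER0 i
  have hYmem : ∀ i, MemLp (Y i) 2 P := by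
    intro i
    refine MemLp.of_bound ((hφm.comp (hmeas i)).aestronglyMeasurable) (c' ^ 2)
      (ae_of_all _ fun ω => ?_)
    rw [Real.norm_eq_abs, abs_of_nonneg (hφ0 _)]
    exact hφbd _
  have hYind : iIndepFun Y P :=
    hindep.comp (fun _ => φ) (fun _ => hφm)
  -- Chebyshev bound for each k
  have cheb : ∀ k ≤ n, P {ω | η₃ * Bn ≤
      |∑ i ∈ Finset.range k, Y i ω - ∑ i ∈ Finset.range k, ∫ ω', Y i ω' ∂P|}
      ≤ ENNReal.ofReal (δ ^ 2 / η₃ ^ 2) := by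
    intro k hk
    have hXmem : MemLp (∑ i ∈ Finset.range k, Y i) 2 P :=
      memLp_finset_sum' _ fun i _ => hYmem i
    have hμX : ∫ ω, (∑ i ∈ Finset.range k, Y i) ω ∂P
        = ∑ i ∈ Finset.range k, ∫ ω', Y i ω' ∂P := by
      simp only [Finset.sum_apply]
      exact integral_finset_sum _ fun i _ => hYint i
    have hset : {ω | η₃ * Bn ≤
        |∑ i ∈ Finset.range k, Y i ω - ∑ i ∈ Finset.range k, ∫ ω', Y i ω' ∂P|}
        = {ω | η₃ * Bn ≤ |(∑ i ∈ Finset.range k, Y i) ω - ∫ ω', (∑ i ∈ Finset.range k, Y i) ω' ∂P|} := by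
      ext ω
      simp only [Set.mem_setOf_eq, Finset.sum_apply]
      rw [integral_finset_sum _ fun i _ => hYint i]
    have hch := meas_ge_le_variance_div_sq (μ := P) hXmem
      (c := η₃ * Bn) (by positivity)
    have hvs : variance (∑ i ∈ Finset.range k, Y i) P
        = ∑ i ∈ Finset.range k, variance (Y i) P :=
      IndepFun.variance_sum (fun i _ => hYmem i)
        (fun i _ j _ hij => hYind.indepFun hij)
    have hvarYi : ∀ i, variance (Y i) P ≤ δ ^ 2 * Bn * σ2 i := by
      intro i
      refine (variance_le_expectation_sq ((hφm.comp (hmeas i)).aestronglyMeasurable)).trans ?_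
      have h1 : ∫ ω, ((Y i) ^ 2) ω ∂P ≤ ∫ ω, δ ^ 2 * Bn * Z i ω ^ 2 ∂P := by
        refine integral_mono ((hYmem i).integrable_sq) ((hZ2int i).const_mul _)
          fun ω => ?_
        simp only [Pi.pow_apply]
        calc (Y i ω) ^ 2 ≤ c' ^ 2 * Z i ω ^ 2 := hφsq _
          _ = δ ^ 2 * Bn * Z i ω ^ 2 := by rw [hc'sq]
      calc ∫ ω, ((Y i) ^ 2) ω ∂P ≤ ∫ ω, δ ^ 2 * Bn * Z i ω ^ 2 ∂P := h1
        _ = δ ^ 2 * Bn * σ2 i := by rw [integral_const_mul, hvar i]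
    have hvb : variance (∑ i ∈ Finset.range k, Y i) P ≤ δ ^ 2 * Bn * Bn := by
      rw [hvs]
      calc ∑ i ∈ Finset.range k, variance (Y i) P
          ≤ ∑ i ∈ Finset.range k, δ ^ 2 * Bn * σ2 i :=
            Finset.sum_le_sum fun i _ => hvarYi i
        _ = δ ^ 2 * Bn * ∑ i ∈ Finset.range k, σ2 i := by rw [← Finset.mul_sum]
        _ ≤ δ ^ 2 * Bn * Bn := by
            have : ∑ i ∈ Finset.range k, σ2 i ≤ Bn :=
              Finset.sum_le_sum_of_subset_of_nonneg (Finset.range_subset_range.2 hk)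
                (fun i _ _ => hσ i)
            have h2 : (0:ℝ) ≤ δ ^ 2 * Bn := by positivity
            nlinarith
    rw [hset]
    refine hch.trans (ENNReal.ofReal_le_ofReal ?_)
    have heq : δ ^ 2 * Bn * Bn / (η₃ * Bn) ^ 2 = δ ^ 2 / η₃ ^ 2 := by
      field_simp
    calc variance (∑ i ∈ Finset.range k, Y i) P / (η₃ * Bn) ^ 2
        ≤ (δ ^ 2 * Bn * Bn) / (η₃ * Bn) ^ 2 := by gcongr
      _ = δ ^ 2 / η₃ ^ 2 := heq
  -- Markov bound for RR
  set RR : Ω → ℝ := fun ω => ∑ i ∈ Finset.range n, R i ω with hRRdef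
  have hRRint : Integrable RR P := integrable_finset_sum _ fun i _ => hRint i
  have hRRmean : ∫ ω, RR ω ∂P = L := by
    rw [hRRdef, hLdef]
    rw [integral_finset_sum _ fun i _ => hRint i]
    exact Finset.sum_congr rfl fun i _ => hER i
  have markRR : P {ω | η₃ * Bn ≤ RR ω} ≤ ENNReal.ofReal (L / (η₃ * Bn)) := by
    have := markov_aux P (ae_of_all _ fun ω => Finset.sum_nonneg fun i _ => hψ0 (Z i ω))
      hRRint (t := η₃ * Bn) (by positivity)
    rwa [hRRmean] at this
  -- containment
  have hcont : {ω | ∃ k ∈ s, 3 * η₃ * Bn ≤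
      |∑ i ∈ Finset.range k, (Z i ω) ^ 2 - ∑ i ∈ Finset.range k, σ2 i|}
      ⊆ (⋃ k ∈ s, {ω | η₃ * Bn ≤
          |∑ i ∈ Finset.range k, Y i ω - ∑ i ∈ Finset.range k, ∫ ω', Y i ω' ∂P|})
        ∪ {ω | η₃ * Bn ≤ RR ω} := by
    intro ω hω
    obtain ⟨k, hks, hineq⟩ := hω
    by_contra hno
    simp only [Set.mem_union, Set.mem_iUnion, Set.mem_setOf_eq, not_or, not_exists,
      not_le] at hno
    obtain ⟨hno1, hno2⟩ := hno
    have h1 := hno1 k hks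
    -- decomposition
    have hdecomp : ∑ i ∈ Finset.range k, (Z i ω) ^ 2 - ∑ i ∈ Finset.range k, σ2 i
        = (∑ i ∈ Finset.range k, Y i ω - ∑ i ∈ Finset.range k, ∫ ω', Y i ω' ∂P)
          + (∑ i ∈ Finset.range k, R i ω - ∑ i ∈ Finset.range k, ∫ ω', R i ω' ∂P) := by
      have e1 : ∑ i ∈ Finset.range k, (Z i ω) ^ 2
          = ∑ i ∈ Finset.range k, Y i ω + ∑ i ∈ Finset.range k, R i ω := by
        rw [← Finset.sum_add_distrib]
        exact Finset.sum_congr rfl fun i _ => (hφψ (Z i ω)).symm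
      have e2 : ∑ i ∈ Finset.range k, σ2 i
          = ∑ i ∈ Finset.range k, ∫ ω', Y i ω' ∂P + ∑ i ∈ Finset.range k, ∫ ω', R i ω' ∂P := by
        rw [← Finset.sum_add_distrib]
        exact Finset.sum_congr rfl fun i _ => hsplit i
      rw [e1, e2]; ring
    have hRk : ∑ i ∈ Finset.range k, R i ω ≤ RR ω := by
      rw [hRRdef]
      exact Finset.sum_le_sum_of_subset_of_nonneg (Finset.range_subset_range.2 (hs k hks))
        (fun i _ _ => hψ0 _)
    have hRk0 : 0 ≤ ∑ i ∈ Finset.range k, R i ω :=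
      Finset.sum_nonneg fun i _ => hψ0 _
    have hρ : ∑ i ∈ Finset.range k, ∫ ω', R i ω' ∂P ≤ L := by
      rw [hLdef]
      calc ∑ i ∈ Finset.range k, ∫ ω', R i ω' ∂P
          ≤ ∑ i ∈ Finset.range n, ∫ ω', R i ω' ∂P :=
            Finset.sum_le_sum_of_subset_of_nonneg (Finset.range_subset_range.2 (hs k hks))
              (fun i _ _ => hER0 i)
        _ = _ := Finset.sum_congr rfl fun i _ => hER i
    have hρ0 : 0 ≤ ∑ i ∈ Finset.range k, ∫ ω', R i ω' ∂P :=
      Finset.sum_nonneg fun i _ => hER0 i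
    have habs : |∑ i ∈ Finset.range k, (Z i ω) ^ 2 - ∑ i ∈ Finset.range k, σ2 i|
        < 3 * (η₃ * Bn) := by
      rw [hdecomp]
      calc |(∑ i ∈ Finset.range k, Y i ω - ∑ i ∈ Finset.range k, ∫ ω', Y i ω' ∂P)
          + (∑ i ∈ Finset.range k, R i ω - ∑ i ∈ Finset.range k, ∫ ω', R i ω' ∂P)|
          ≤ |∑ i ∈ Finset.range k, Y i ω - ∑ i ∈ Finset.range k, ∫ ω', Y i ω' ∂P|
            + |∑ i ∈ Finset.range k, R i ω - ∑ i ∈ Finset.range k, ∫ ω', R i ω' ∂P| :=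
            abs_add_le _ _
        _ < η₃ * Bn + (η₃ * Bn + η₃ * Bn) := by
            refine add_lt_add_of_lt_of_le h1 ?_
            rw [abs_le]
            constructor
            · linarith
            · linarith [hno2, hRk, hL]
        _ = 3 * (η₃ * Bn) := by ring
    rw [show (3:ℝ) * η₃ * Bn = 3 * (η₃ * Bn) by ring] at hineq
    linarith
  calc P _ ≤ P ((⋃ k ∈ s, {ω | η₃ * Bn ≤
          |∑ i ∈ Finset.range k, Y i ω - ∑ i ∈ Finset.range k, ∫ ω', Y i ω' ∂P|})
        ∪ {ω | η₃ * Bn ≤ RR ω}) := measure_mono hcont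
    _ ≤ P (⋃ k ∈ s, {ω | η₃ * Bn ≤
          |∑ i ∈ Finset.range k, Y i ω - ∑ i ∈ Finset.range k, ∫ ω', Y i ω' ∂P|})
        + P {ω | η₃ * Bn ≤ RR ω} := measure_union_le _ _
    _ ≤ (∑ k ∈ s, P {ω | η₃ * Bn ≤
          |∑ i ∈ Finset.range k, Y i ω - ∑ i ∈ Finset.range k, ∫ ω', Y i ω' ∂P|})
        + ENNReal.ofReal (L / (η₃ * Bn)) :=
        add_le_add (measure_biUnion_finset_le _ _) markRR
    _ ≤ (∑ _k ∈ s, ENNReal.ofReal (δ ^ 2 / η₃ ^ 2)) + ENNReal.ofReal (L / (η₃ * Bn)) :=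
        add_le_add (Finset.sum_le_sum fun k hk => cheb k (hs k hk)) le_rfl
    _ = s.card * ENNReal.ofReal (δ ^ 2 / η₃ ^ 2) + ENNReal.ofReal (L / (η₃ * Bn)) := by
        rw [Finset.sum_const, nsmul_eq_mul]
    _ ≤ N * ENNReal.ofReal (δ ^ 2 / η₃ ^ 2) + ENNReal.ofReal (L / (η₃ * Bn)) := by
        exact add_le_add (mul_le_mul_left (Nat.cast_le.2 hsN) _) le_rfl



set_option maxHeartbeats 2000000 in
/-- Under Lindeberg's condition,
`max_{0≤k≤n} |s_k²/s_n² − ∑_{i=1}^k (Z_i − Z̄_n)² / ∑_{i=1}^n (Z_i − Z̄_n)²|`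
converges to 0 in probability. -/
theorem max_partial_variance_ratio_nearness
    {Ω : Type*} [MeasurableSpace Ω] (P : Measure Ω) [IsProbabilityMeasure P]
    (Z : ℕ → Ω → ℝ) (σ2 : ℕ → ℝ)
    (hmeas : ∀ i, Measurable (Z i))
    (hindep : iIndepFun Z P)
    (hL2 : ∀ i, MemLp (Z i) 2 P)
    (hmean : ∀ i, ∫ ω, Z i ω ∂P = 0)
    (hvar : ∀ i, ∫ ω, (Z i ω) ^ 2 ∂P = σ2 i)
    (hpos : ∀ i, 0 < σ2 i)
    (hLind : ∀ ε > (0 : ℝ), Tendsto (fun n =>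
      (∑ i ∈ Finset.range n, σ2 i)⁻¹ *
        ∑ i ∈ Finset.range n,
          ∫ ω in {ω | ε * Real.sqrt (∑ j ∈ Finset.range n, σ2 j) ≤ |Z i ω|}, (Z i ω) ^ 2 ∂P)
      atTop (nhds 0)) :
    ∀ ε > (0 : ℝ), Tendsto (fun n =>
      P {ω | ∃ k ∈ Finset.range (n+1),
        ε ≤ |(∑ i ∈ Finset.range k, σ2 i) / (∑ i ∈ Finset.range n, σ2 i) -
          (∑ i ∈ Finset.range k, (Z i ω - (∑ j ∈ Finset.range n, Z j ω) / n) ^ 2) /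
            ∑ i ∈ Finset.range n, (Z i ω - (∑ j ∈ Finset.range n, Z j ω) / n) ^ 2|})
      atTop (nhds 0) := by
  -- preliminary facts
  have hBpos : ∀ n, 1 ≤ n → 0 < ∑ i ∈ Finset.range n, σ2 i := by
    intro n hn
    exact Finset.sum_pos (fun i _ => hpos i) ⟨0, Finset.mem_range.2 hn⟩
  have hBmono : StrictMono (fun k => ∑ i ∈ Finset.range k, σ2 i) := by
    apply strictMono_nat_of_lt_succ
    intro k
    rw [Finset.sum_range_succ]
    linarith [hpos k]
  -- variance of Z i
  have hvarZ : ∀ i, variance (Z i) P = σ2 i := by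
    intro i
    rw [variance_eq_sub (hL2 i)]
    have h1 : ∫ ω, ((Z i) ^ 2) ω ∂P = σ2 i := by
      simp only [Pi.pow_apply]; exact hvar i
    rw [h1, hmean i]; ring
  -- second moment of the sum
  have hSn2 : ∀ n, ∫ ω, (∑ j ∈ Finset.range n, Z j ω) ^ 2 ∂P = ∑ i ∈ Finset.range n, σ2 i := by
    intro n
    have hX2 : MemLp (∑ j ∈ Finset.range n, Z j) 2 P :=
      memLp_finset_sum' _ fun i _ => hL2 i
    have hEX : ∫ ω, (∑ j ∈ Finset.range n, Z j) ω ∂P = 0 := by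
      simp only [Finset.sum_apply]
      rw [integral_finset_sum _ fun i _ => (hL2 i).integrable one_le_two]
      simp [hmean]
    have hvs : variance (∑ j ∈ Finset.range n, Z j) P = ∑ i ∈ Finset.range n, σ2 i := by
      rw [IndepFun.variance_sum (fun i _ => hL2 i)
        (fun i _ j _ hij => hindep.indepFun hij)]
      exact Finset.sum_congr rfl fun i _ => hvarZ i
    have := variance_eq_sub hX2
    rw [hEX, hvs] at this
    have h2 : ∫ ω, ((∑ j ∈ Finset.range n, Z j) ^ 2) ω ∂P
        = ∫ ω, (∑ j ∈ Finset.range n, Z j ω) ^ 2 ∂P := by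
      refine integral_congr_ae (ae_of_all _ fun ω => ?_)
      simp [Finset.sum_apply]
    rw [h2] at this
    linarith
  -- sigma max small
  have hsmall : ∀ η > (0:ℝ), ∀ᶠ n in atTop, ∀ i < n, σ2 i ≤ η * ∑ i ∈ Finset.range n, σ2 i := by
    intro η hη
    set δ := Real.sqrt (η / 2) with hδdef
    have hδ : 0 < δ := Real.sqrt_pos.2 (by linarith)
    have hδsq : δ ^ 2 = η / 2 := Real.sq_sqrt (by linarith)
    have hev := (hLind δ hδ).eventually_lt_const (show (0:ℝ) < η / 2 by linarith)
    filter_upwards [hev, eventually_ge_atTop 1] with n hn hn1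
    intro i hi
    set Bn := ∑ i ∈ Finset.range n, σ2 i with hBndef
    have hBn : 0 < Bn := hBpos n hn1
    set c' := δ * Real.sqrt Bn with hc'def
    have hc'sq : c' ^ 2 = δ ^ 2 * Bn := by rw [hc'def, mul_pow, Real.sq_sqrt hBn.le]
    set S := {ω | c' ≤ |Z i ω|} with hSdef
    have hSm : MeasurableSet S := measurableSet_le measurable_const (hmeas i).abs
    have hZ2int : Integrable (fun ω => Z i ω ^ 2) P := (hL2 i).integrable_sq
    have hL : ∑ j ∈ Finset.range n, (∫ ω in {ω | c' ≤ |Z j ω|}, Z j ω ^ 2 ∂P) ≤ η / 2 * Bn := by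
      have h2 : Bn⁻¹ * ∑ j ∈ Finset.range n, (∫ ω in {ω | c' ≤ |Z j ω|}, Z j ω ^ 2 ∂P)
          < η / 2 := hn
      have h3 : (∑ j ∈ Finset.range n, ∫ ω in {ω | c' ≤ |Z j ω|}, Z j ω ^ 2 ∂P)
          = Bn * (Bn⁻¹ * ∑ j ∈ Finset.range n, ∫ ω in {ω | c' ≤ |Z j ω|}, Z j ω ^ 2 ∂P) := by
        field_simp
      rw [h3]
      nlinarith
    have hterm : (∫ ω in S, Z i ω ^ 2 ∂P) ≤ η / 2 * Bn := by
      refine le_trans ?_ hL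
      refine Finset.single_le_sum (f := fun j => ∫ ω in {ω | c' ≤ |Z j ω|}, Z j ω ^ 2 ∂P)
        (fun j _ => setIntegral_nonneg (measurableSet_le measurable_const (hmeas j).abs)
          fun ω _ => sq_nonneg _) (Finset.mem_range.2 hi)
    have hcompl : (∫ ω in Sᶜ, Z i ω ^ 2 ∂P) ≤ η / 2 * Bn := by
      have hb : ∀ ω ∈ Sᶜ, Z i ω ^ 2 ≤ c' ^ 2 := by
        intro ω hω
        simp only [hSdef, Set.mem_compl_iff, Set.mem_setOf_eq, not_le] at hω
        nlinarith [sq_abs (Z i ω), abs_nonneg (Z i ω)]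
      calc (∫ ω in Sᶜ, Z i ω ^ 2 ∂P) ≤ ∫ _ω in Sᶜ, c' ^ 2 ∂P := by
            refine setIntegral_mono_on hZ2int.integrableOn ((integrableOn_const_iff (by finiteness)).2 ?_)
              hSm.compl hb
            right; exact measure_lt_top _ _
        _ = (P Sᶜ).toReal * c' ^ 2 := by rw [setIntegral_const]; rfl
        _ ≤ 1 * c' ^ 2 := by
            have : (P Sᶜ).toReal ≤ 1 := by
              have := prob_le_one (μ := P) (s := Sᶜ)
              exact ENNReal.toReal_le_of_le_ofReal one_pos.le (by simpa using this)
            nlinarith [sq_nonneg c']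
        _ = δ ^ 2 * Bn := by rw [one_mul, hc'sq]
        _ = η / 2 * Bn := by rw [hδsq]
    have hsplitInt : σ2 i = (∫ ω in S, Z i ω ^ 2 ∂P) + ∫ ω in Sᶜ, Z i ω ^ 2 ∂P := by
      rw [← hvar i, ← integral_add_compl hSm hZ2int]
    linarith

  -- MAIN BODY
  intro ε hε
  rw [ENNReal.tendsto_nhds_zero]
  intro α hα
  obtain ⟨a, ha, haα⟩ : ∃ a : ℝ, 0 < a ∧ ENNReal.ofReal a ≤ α := by
    rcases eq_or_ne α ⊤ with h | h
    · exact ⟨1, one_pos, h ▸ le_top⟩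
    · refine ⟨min 1 α.toReal, lt_min one_pos (ENNReal.toReal_pos hα.ne' h), ?_⟩
      calc ENNReal.ofReal (min 1 α.toReal) ≤ ENNReal.ofReal α.toReal :=
            ENNReal.ofReal_le_ofReal (min_le_right _ _)
        _ = α := ENNReal.ofReal_toReal h
  set c := min (ε / 4) (1 / 4) with hcdef
  have hc : 0 < c := lt_min (by linarith) (by norm_num)
  have hc4 : c ≤ 1 / 4 := min_le_right _ _
  have hcε : 2 * c < ε := by
    have h := min_le_left (ε / 4) (1 / 4)
    rw [← hcdef] at h
    linarith
  set θ := c / 8 with hθdef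
  have hθ : 0 < θ := by positivity
  set η := c / 4 with hηdef
  have hη : 0 < η := by positivity
  set η' := c ^ 2 / (4 * (c + 8)) with hη'def
  have hη' : 0 < η' := by positivity
  set η₃ := η / 6 with hη₃def
  have hη₃ : 0 < η₃ := by positivity
  set m := max (⌈4 / η⌉₊) 1 with hmdef
  have hm1 : 1 ≤ m := le_max_right _ _
  have hm0 : (0:ℝ) < m := by exact_mod_cast hm1
  have hminv : 1 / (m:ℝ) ≤ η / 4 := by
    have h1 : 4 / η ≤ (⌈4 / η⌉₊ : ℝ) := Nat.le_ceil _
    have h2 : ((⌈4 / η⌉₊ : ℕ) : ℝ) ≤ (m:ℝ) := by exact_mod_cast le_max_left _ _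
    have h3 : 4 / η ≤ (m:ℝ) := h1.trans h2
    rw [div_le_div_iff₀ hm0 (by positivity)]
    rw [div_le_iff₀ hη] at h3
    linarith
  set δ := η₃ * Real.sqrt (a / (3 * (m + 1))) with hδdef
  have hδ : 0 < δ := by
    apply mul_pos hη₃ (Real.sqrt_pos.2 (by positivity))
  have hδsq : δ ^ 2 / η₃ ^ 2 = a / (3 * ((m:ℝ) + 1)) := by
    rw [hδdef, mul_pow, Real.sq_sqrt (by positivity : (0:ℝ) ≤ a / (3 * ((m:ℝ) + 1)))]
    field_simp
  -- eventual facts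
  have ev1 := hsmall (η / 4) (by positivity)
  have hρ0 : (0:ℝ) < min η₃ (η₃ * a / 3) := lt_min hη₃ (by positivity)
  have ev2 := (hLind δ hδ).eventually_lt_const hρ0
  have ev4 : ∀ᶠ n : ℕ in atTop, 1 / (η' * n) ≤ a / 3 := by
    have h2 : Tendsto (fun n : ℕ => (1 / η') * (1 / n)) atTop (nhds ((1/η') * 0)) :=
      tendsto_one_div_atTop_nhds_zero_nat.const_mul _
    rw [mul_zero] at h2
    have h1 : Tendsto (fun n : ℕ => 1 / (η' * n)) atTop (nhds 0) := by
      refine h2.congr fun n => ?_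
      rw [one_div, one_div, one_div, mul_inv]
    filter_upwards [h1.eventually_lt_const (show (0:ℝ) < a/3 by positivity)] with n hn
    exact hn.le
  filter_upwards [ev1, ev2, ev4, eventually_ge_atTop 1] with n hev1 hev2 hev4 hn1
  set Bn := ∑ i ∈ Finset.range n, σ2 i with hBndef
  have hBn : 0 < Bn := hBpos n hn1
  have hn0 : (0:ℝ) < n := by exact_mod_cast hn1
  set L := ∑ i ∈ Finset.range n,
      ∫ ω in {ω | δ * Real.sqrt Bn ≤ |Z i ω|}, (Z i ω) ^ 2 ∂P with hLdef
  have hLBq : L = Bn * (Bn⁻¹ * L) := by field_simp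
  have hL1 : L ≤ η₃ * Bn := by
    have h2 : Bn⁻¹ * L ≤ η₃ := (hev2.trans_le (min_le_left _ _)).le
    calc L = Bn * (Bn⁻¹ * L) := hLBq
      _ ≤ Bn * η₃ := mul_le_mul_of_nonneg_left h2 hBn.le
      _ = η₃ * Bn := mul_comm _ _
  have hL2' : L / (η₃ * Bn) ≤ a / 3 := by
    have h2 : Bn⁻¹ * L ≤ η₃ * a / 3 := (hev2.trans_le (min_le_right _ _)).le
    rw [div_le_iff₀ (mul_pos hη₃ hBn)]
    calc L = Bn * (Bn⁻¹ * L) := hLBq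
      _ ≤ Bn * (η₃ * a / 3) := mul_le_mul_of_nonneg_left h2 hBn.le
      _ = a / 3 * (η₃ * Bn) := by ring
  set BadM := {ω : Ω | η' * Bn ≤ (n:ℝ) * ((∑ j ∈ Finset.range n, Z j ω) / n) ^ 2} with hBadMdef
  set BadA := {ω : Ω | ∃ k ∈ Finset.range (n+1),
    η * Bn ≤ |∑ i ∈ Finset.range k, (Z i ω) ^ 2 - ∑ i ∈ Finset.range k, σ2 i|} with hBadAdef
  -- Step S1: containment
  have hS1 : {ω : Ω | ∃ k ∈ Finset.range (n+1),
      ε ≤ |(∑ i ∈ Finset.range k, σ2 i) / Bn -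
        (∑ i ∈ Finset.range k, (Z i ω - (∑ j ∈ Finset.range n, Z j ω) / n) ^ 2) /
          ∑ i ∈ Finset.range n, (Z i ω - (∑ j ∈ Finset.range n, Z j ω) / n) ^ 2|}
      ⊆ BadA ∪ BadM := by
    intro ω hω
    by_contra hno
    simp only [hBadAdef, hBadMdef, Set.mem_union, Set.mem_setOf_eq, not_or, not_exists,
      not_le, not_and] at hno
    obtain ⟨hno1, hno2⟩ := hno
    obtain ⟨k, hk, hineq⟩ := hω
    have hkn : k ≤ n := Nat.lt_succ_iff.1 (Finset.mem_range.1 hk)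
    have hTa := cross_term (z := fun i => Z i ω) (v := (∑ j ∈ Finset.range n, Z j ω) / n) hθ n
    have hAn : |∑ i ∈ Finset.range n, (Z i ω) ^ 2 - ∑ i ∈ Finset.range n, σ2 i| < η * Bn :=
      hno1 n (Finset.mem_range.2 (Nat.lt_succ_self n))
    have hAnpos : (0:ℝ) ≤ ∑ i ∈ Finset.range n, (Z i ω) ^ 2 :=
      Finset.sum_nonneg fun i _ => sq_nonneg _
    have hθA : θ * ∑ i ∈ Finset.range n, (Z i ω) ^ 2 ≤ c / 4 * Bn := by
      have hd := abs_lt.1 hAn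
      have h1 : ∑ i ∈ Finset.range n, (Z i ω) ^ 2 ≤ (1 + η) * Bn := by
        rw [← hBndef] at hd
        linarith [hd.2]
      have h2 : θ * ∑ i ∈ Finset.range n, (Z i ω) ^ 2 ≤ θ * ((1 + η) * Bn) :=
        mul_le_mul_of_nonneg_left h1 hθ.le
      have h5 : θ * ((1 + η) * Bn) ≤ c / 4 * Bn := by
        have h6 : θ * (1 + η) ≤ c / 4 := by
          rw [hθdef, hηdef]
          have h7 : (1:ℝ) + c / 4 ≤ 2 := by linarith
          have h8 : c / 8 * (1 + c / 4) ≤ c / 8 * 2 :=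
            mul_le_mul_of_nonneg_left h7 (by positivity)
          linarith
        calc θ * ((1 + η) * Bn) = (θ * (1 + η)) * Bn := by ring
          _ ≤ c / 4 * Bn := mul_le_mul_of_nonneg_right h6 hBn.le
      exact h2.trans h5
    have hcross : (1 + 1 / θ) * n * ((∑ j ∈ Finset.range n, Z j ω) / n) ^ 2 ≤ c / 4 * Bn := by
      have h2 : (n:ℝ) * ((∑ j ∈ Finset.range n, Z j ω) / n) ^ 2 < η' * Bn := hno2
      have h3 : (0:ℝ) < 1 + 1 / θ := by positivity
      have h4 : (1 + 1/θ) * ((n:ℝ) * ((∑ j ∈ Finset.range n, Z j ω) / n) ^ 2)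
          ≤ (1 + 1/θ) * (η' * Bn) := mul_le_mul_of_nonneg_left h2.le h3.le
      have h5 : (1 + 1/θ) * η' = c / 4 := by
        rw [hθdef, hη'def]; field_simp
      calc (1 + 1/θ) * n * ((∑ j ∈ Finset.range n, Z j ω) / n) ^ 2
          = (1 + 1/θ) * ((n:ℝ) * ((∑ j ∈ Finset.range n, Z j ω) / n) ^ 2) := by ring
        _ ≤ (1 + 1/θ) * (η' * Bn) := h4
        _ = ((1 + 1/θ) * η') * Bn := by ring
        _ = c / 4 * Bn := by rw [h5]
    have hTB : ∀ k' ≤ n, |(∑ i ∈ Finset.range k', (Z i ω - (∑ j ∈ Finset.range n, Z j ω) / n) ^ 2)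
        - ∑ i ∈ Finset.range k', σ2 i| ≤ c * Bn := by
      intro k' hk'
      have h1 := hTa k' hk'
      have h2 : |∑ i ∈ Finset.range k', (Z i ω) ^ 2 - ∑ i ∈ Finset.range k', σ2 i| < η * Bn :=
        hno1 k' (Finset.mem_range.2 (by omega))
      have h6 := abs_sub_le (∑ i ∈ Finset.range k', (Z i ω - (∑ j ∈ Finset.range n, Z j ω) / n) ^ 2)
        (∑ i ∈ Finset.range k', (Z i ω) ^ 2) (∑ i ∈ Finset.range k', σ2 i)
      have h7 : η * Bn = c / 4 * Bn := by rw [hηdef]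
      linarith [mul_pos hc hBn]
    have hT0 : (0:ℝ) ≤ ∑ i ∈ Finset.range k, (Z i ω - (∑ j ∈ Finset.range n, Z j ω) / n) ^ 2 :=
      Finset.sum_nonneg fun i _ => sq_nonneg _
    have hTkn : (∑ i ∈ Finset.range k, (Z i ω - (∑ j ∈ Finset.range n, Z j ω) / n) ^ 2)
        ≤ ∑ i ∈ Finset.range n, (Z i ω - (∑ j ∈ Finset.range n, Z j ω) / n) ^ 2 :=
      Finset.sum_le_sum_of_subset_of_nonneg (Finset.range_subset_range.2 hkn) fun i _ _ => sq_nonneg _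
    have hTBn : |(∑ i ∈ Finset.range n, (Z i ω - (∑ j ∈ Finset.range n, Z j ω) / n) ^ 2)
        - Bn| ≤ c * Bn := by
      have := hTB n le_rfl
      rw [← hBndef] at this
      exact this
    have hfinal := ratio_close hBn hc hc4 hT0 hTkn (hTB k hkn) hTBn
    exact absurd hineq (not_le.2 (lt_of_le_of_lt hfinal hcε))
  -- Step BadM
  have hBadM : P BadM ≤ ENNReal.ofReal (a / 3) := by
    have hseteq : BadM = {ω : Ω | η' * Bn * n ≤ (∑ j ∈ Finset.range n, Z j ω) ^ 2} := by
      ext ω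
      simp only [hBadMdef, Set.mem_setOf_eq]
      have he : (n:ℝ) * ((∑ j ∈ Finset.range n, Z j ω) / n) ^ 2
          = (∑ j ∈ Finset.range n, Z j ω) ^ 2 / n := by
        field_simp
      rw [he, le_div_iff₀ hn0]
    rw [hseteq]
    have hint : Integrable (fun ω => (∑ j ∈ Finset.range n, Z j ω) ^ 2) P := by
      have hX2 : MemLp (∑ j ∈ Finset.range n, Z j) 2 P :=
        memLp_finset_sum' _ fun i _ => hL2 i
      exact hX2.integrable_sq.congr (ae_of_all _ fun ω => by simp [Finset.sum_apply])
    have hmk := markov_aux P (ae_of_all _ fun ω => sq_nonneg _) hint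
      (t := η' * Bn * n) (by positivity)
    refine hmk.trans (ENNReal.ofReal_le_ofReal ?_)
    rw [hSn2 n, ← hBndef]
    have he2 : Bn / (η' * Bn * n) = 1 / (η' * n) := by
      field_simp
    rw [he2]
    exact hev4
  -- grid points
  have hsgrid : ∀ k ∈ (Finset.range (m+1)).image
      (fun j => gridPt (fun k => ∑ i ∈ Finset.range k, σ2 i) n m j), k ≤ n := by
    intro k hk
    obtain ⟨j, hj, rfl⟩ := Finset.mem_image.1 hk
    apply Nat.sInf_le
    have hj' : (j:ℝ) ≤ m := by exact_mod_cast Nat.lt_succ_iff.1 (Finset.mem_range.1 hj)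
    simp only [Set.mem_setOf_eq]
    have he : (m:ℝ) * ((∑ i ∈ Finset.range n, σ2 i) / m) = ∑ i ∈ Finset.range n, σ2 i := by
      field_simp
    have h2 : (j:ℝ) * ((∑ i ∈ Finset.range n, σ2 i) / m)
        ≤ (m:ℝ) * ((∑ i ∈ Finset.range n, σ2 i) / m) := by
      have hq : (0:ℝ) ≤ (∑ i ∈ Finset.range n, σ2 i) / m := by positivity
      exact mul_le_mul_of_nonneg_right hj' hq
    rw [he] at h2
    exact h2
  -- Step BadA
  have hBadA_sub : BadA ⊆ {ω : Ω | ∃ k ∈ (Finset.range (m+1)).image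
      (fun j => gridPt (fun k => ∑ i ∈ Finset.range k, σ2 i) n m j),
      3 * η₃ * Bn ≤ |∑ i ∈ Finset.range k, (Z i ω) ^ 2 - ∑ i ∈ Finset.range k, σ2 i|} := by
    intro ω hω
    obtain ⟨k, hk, hineq⟩ := hω
    have hkn : k ≤ n := Nat.lt_succ_iff.1 (Finset.mem_range.1 hk)
    obtain ⟨j, hjm, hgn, hbound⟩ := grid_approx
      (a := fun k => ∑ i ∈ Finset.range k, (Z i ω) ^ 2)
      (b := fun k => ∑ i ∈ Finset.range k, σ2 i)
      (γ := η / 4 * Bn) hm1 (by positivity) (by simp) hBmono hBn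
      (fun i hi => by
        simp only [Finset.sum_range_succ]
        linarith [hev1 i hi])
      (monotone_nat_of_le_succ fun k' => by
        simp only [Finset.sum_range_succ]
        linarith [sq_nonneg (Z k' ω)])
      k hkn
    refine ⟨gridPt (fun k => ∑ i ∈ Finset.range k, σ2 i) n m j,
      Finset.mem_image.2 ⟨j, Finset.mem_range.2 (by omega), rfl⟩, ?_⟩
    have h1 : (∑ i ∈ Finset.range n, σ2 i) / m ≤ η / 4 * Bn := by
      rw [← hBndef]
      calc Bn / m = Bn * (1 / m) := by ring
        _ ≤ Bn * (η / 4) := mul_le_mul_of_nonneg_left hminv hBn.le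
        _ = η / 4 * Bn := by ring
    have h3 : 3 * η₃ * Bn = η / 2 * Bn := by rw [hη₃def]; ring
    rw [← hBndef] at hbound
    rw [h3]
    linarith
  have htr := trunc_lemma P Z σ2 hmeas hindep hL2 hvar (fun i => (hpos i).le) n hδ hη₃ hBn hL1
    ((Finset.range (m+1)).image (fun j => gridPt (fun k => ∑ i ∈ Finset.range k, σ2 i) n m j))
    hsgrid (m+1) ((Finset.card_image_le).trans (le_of_eq (Finset.card_range _)))
  have hBadA : P BadA ≤ ENNReal.ofReal (a / 3) + ENNReal.ofReal (a / 3) := by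
    refine (measure_mono hBadA_sub).trans (htr.trans ?_)
    refine add_le_add (le_of_eq ?_) (ENNReal.ofReal_le_ofReal hL2')
    calc ((m+1 : ℕ) : ENNReal) * ENNReal.ofReal (δ ^ 2 / η₃ ^ 2)
        = ENNReal.ofReal (((m:ℝ)+1) * (δ ^ 2 / η₃ ^ 2)) := by
          rw [ENNReal.ofReal_mul (by positivity)]
          congr 1
          rw [← ENNReal.ofReal_natCast (m+1)]
          congr 1
          push_cast
          ring
      _ = ENNReal.ofReal (a / 3) := by
          rw [hδsq]
          congr 1
          field_simp
  calc P {ω : Ω | ∃ k ∈ Finset.range (n+1),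
      ε ≤ |(∑ i ∈ Finset.range k, σ2 i) / Bn -
        (∑ i ∈ Finset.range k, (Z i ω - (∑ j ∈ Finset.range n, Z j ω) / n) ^ 2) /
          ∑ i ∈ Finset.range n, (Z i ω - (∑ j ∈ Finset.range n, Z j ω) / n) ^ 2|}
      ≤ P (BadA ∪ BadM) := measure_mono hS1
    _ ≤ P BadA + P BadM := measure_union_le _ _
    _ ≤ (ENNReal.ofReal (a/3) + ENNReal.ofReal (a/3)) + ENNReal.ofReal (a/3) :=
        add_le_add hBadA hBadM
    _ = ENNReal.ofReal a := by
        rw [← ENNReal.ofReal_add (by positivity) (by positivity),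
          ← ENNReal.ofReal_add (by positivity) (by positivity)]
        congr 1
        ring
    _ ≤ α := haα
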